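/- arXiv:0803.4381 — 7 statements merged into one kernel-verified Lean document; each statement's English description precedes it below -/
import Mathlib

section
/- If A◊B is regular, then for every element (a, P, b) ∈ A◊B, either P = aP₁b for some P₁ ⊆ A×B, or P = caP₁bd for some P₁ ⊆ A×B and some c ∈ a⁻¹, d ∈ b⁻¹ (where a⁻¹ denotes the set of inverses of a). -/
/-- A monoid is regular if every element has an inverse in the von Neumann sense. -/
def RegM (M : Type*) [Monoid M] : Prop := ∀ a : M, ∃ b : M, a * b * a = a ∧ b * a * b = b

section Sch
variable {A B : Type*} [Monoid A] [Monoid B]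

/-- `Pb = {(c, db) : (c,d) ∈ P}` -/
def sR (P : Set (A × B)) (b : B) : Set (A × B) := {q | ∃ p ∈ P, q = (p.1, p.2 * b)}

/-- `aP = {(ac, d) : (c,d) ∈ P}` -/
def sL (a : A) (P : Set (A × B)) : Set (A × B) := {q | ∃ p ∈ P, q = (a * p.1, p.2)}

/-- `aPb = {(ac, db) : (c,d) ∈ P}` -/
def sLR (a : A) (P : Set (A × B)) (b : B) : Set (A × B) :=
  {q | ∃ p ∈ P, q = (a * p.1, p.2 * b)}

/-- Multiplication of the Schützenberger product `A ◊ B`. -/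
def sMul (x y : A × Set (A × B) × B) : A × Set (A × B) × B :=
  (x.1 * y.1, sR x.2.1 y.2.2 ∪ sL x.1 y.2.1, x.2.2 * y.2.2)

/-- The identity of the Schützenberger product. -/
def sOne : A × Set (A × B) × B := (1, ∅, 1)

/-- Regularity of the Schützenberger product `A ◊ B`. -/
def SReg (A B : Type*) [Monoid A] [Monoid B] : Prop :=
  ∀ x : A × Set (A × B) × B, ∃ y : A × Set (A × B) × B,
    sMul (sMul x y) x = x ∧ sMul (sMul y x) y = y

end Sch

/-- If `A ◊ B` is regular then every middle component `P` has the form `aP₁b`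
or `caP₁bd` for some `P₁ ⊆ A × B`, `c ∈ a⁻¹` and `d ∈ b⁻¹`. -/
theorem middle_component_form_of_regular (A B : Type*) [Monoid A] [Monoid B]
    (h : SReg A B) :
    ∀ (a : A) (P : Set (A × B)) (b : B),
      (∃ P₁ : Set (A × B), P = sLR a P₁ b) ∨
      (∃ (P₁ : Set (A × B)) (c : A) (d : B),
        (a * c * a = a ∧ c * a * c = c) ∧ (b * d * b = b ∧ d * b * d = d) ∧
        P = sLR (c * a) P₁ (b * d)) := by
  intro a P b
  left
  refine ⟨{q | (a * q.1, q.2 * b) ∈ P}, ?_⟩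
  ext p
  constructor
  · intro hp
    obtain ⟨y, hxy, -⟩ := h (a, {p}, b)
    have hmid : (sR (sR ({p} : Set (A × B)) y.2.2 ∪ sL a y.2.1) b
        ∪ sL (a * y.1) ({p} : Set (A × B))) = ({p} : Set (A × B)) :=
      congrArg (fun z => z.2.1) hxy
    have h1 : ((a * y.1) * p.1, p.2) ∈ ({p} : Set (A × B)) := by
      rw [← hmid]
      exact Or.inr ⟨p, rfl, rfl⟩
    have h2 : (p.1, (p.2 * y.2.2) * b) ∈ ({p} : Set (A × B)) := by
      rw [← hmid]
      exact Or.inl ⟨(p.1, p.2 * y.2.2), Or.inl ⟨p, rfl, rfl⟩, rfl⟩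
    have e1 : a * (y.1 * p.1) = p.1 := by
      have := (Prod.mk.injEq _ _ _ _).mp h1
      rw [← mul_assoc]; exact this.1
    have e2 : (p.2 * y.2.2) * b = p.2 := ((Prod.mk.injEq _ _ _ _).mp h2).2
    refine ⟨(y.1 * p.1, p.2 * y.2.2), ?_, ?_⟩
    · show (a * (y.1 * p.1), (p.2 * y.2.2) * b) ∈ P
      rw [e1, e2]; exact hp
    · rw [e1, e2]
  · rintro ⟨q, hq, rfl⟩
    exact hq
end

section
/- Suppose A and B are regular monoids and for every (a, P, b) ∈ A◊B, either P = aP₁b or P = caP₁bd for some P₁ ⊆ A×B, c ∈ a⁻¹, d ∈ b⁻¹. Then the Schützenberger product A◊B is regular. -/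
/-- If `A` and `B` are regular and every middle component has the form `aP₁b` or
`caP₁bd`, then `A ◊ B` is regular. -/
theorem schuetzenberger_regular_of_conditions (A B : Type*) [Monoid A] [Monoid B]
    (hA : RegM A) (hB : RegM B)
    (hP : ∀ (a : A) (P : Set (A × B)) (b : B),
      (∃ P₁ : Set (A × B), P = sLR a P₁ b) ∨
      (∃ (P₁ : Set (A × B)) (c : A) (d : B),
        (a * c * a = a ∧ c * a * c = c) ∧ (b * d * b = b ∧ d * b * d = d) ∧
        P = sLR (c * a) P₁ (b * d))) :
    SReg A B := by
  classical
  -- Step 1: every idempotent of A is 1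
  have hgA : ∀ g : A, g * g = g → g = 1 := by
    intro g hg
    rcases hP g {((1:A),(1:B))} 1 with ⟨P₁, h⟩ | ⟨P₁, c, d, ⟨hc1, hc2⟩, _, h⟩
    · have hm : ((1:A),(1:B)) ∈ sLR g P₁ 1 := by rw [← h]; exact rfl
      obtain ⟨p, _, hq⟩ := hm
      have h1 : (1:A) = g * p.1 := congrArg Prod.fst hq
      calc g = g * 1 := (mul_one g).symm
        _ = g * (g * p.1) := by rw [← h1]
        _ = (g * g) * p.1 := (mul_assoc g g p.1).symm
        _ = g * p.1 := by rw [hg]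
        _ = 1 := h1.symm
    · have hm : ((1:A),(1:B)) ∈ sLR (c*g) P₁ (1*d) := by rw [← h]; exact rfl
      obtain ⟨p, _, hq⟩ := hm
      have h1 : (1:A) = (c*g) * p.1 := congrArg Prod.fst hq
      have hcg : (c*g) * (c*g) = c*g := by
        calc (c*g) * (c*g) = c * (g * c * g) := by simp [mul_assoc]
          _ = c * g := by rw [hc1]
      have hcg1 : c * g = 1 := by
        calc c*g = (c*g) * 1 := (mul_one _).symm
          _ = (c*g) * ((c*g) * p.1) := by rw [← h1]
          _ = ((c*g) * (c*g)) * p.1 := (mul_assoc _ _ _).symm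
          _ = (c*g) * p.1 := by rw [hcg]
          _ = 1 := h1.symm
      calc g = 1 * g := (one_mul g).symm
        _ = (c * g) * g := by rw [hcg1]
        _ = c * (g * g) := mul_assoc _ _ _
        _ = c * g := by rw [hg]
        _ = 1 := hcg1
  -- Step 2: every idempotent of B is 1
  have hgB : ∀ g : B, g * g = g → g = 1 := by
    intro g hg
    rcases hP (1:A) {((1:A),(1:B))} g with ⟨P₁, h⟩ | ⟨P₁, c, d, _, ⟨hd1, hd2⟩, h⟩
    · have hm : ((1:A),(1:B)) ∈ sLR 1 P₁ g := by rw [← h]; exact rfl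
      obtain ⟨p, _, hq⟩ := hm
      have h1 : (1:B) = p.2 * g := congrArg Prod.snd hq
      calc g = 1 * g := (one_mul g).symm
        _ = (p.2 * g) * g := by rw [← h1]
        _ = p.2 * (g * g) := mul_assoc _ _ _
        _ = p.2 * g := by rw [hg]
        _ = 1 := h1.symm
    · have hm : ((1:A),(1:B)) ∈ sLR (c*1) P₁ (g*d) := by rw [← h]; exact rfl
      obtain ⟨p, _, hq⟩ := hm
      have h1 : (1:B) = p.2 * (g*d) := congrArg Prod.snd hq
      have hgd : (g*d) * (g*d) = g*d := by
        calc (g*d) * (g*d) = (g * d * g) * d := by simp [mul_assoc]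
          _ = g * d := by rw [hd1]
      have hgd1 : g * d = 1 := by
        calc g*d = 1 * (g*d) := (one_mul _).symm
          _ = (p.2 * (g*d)) * (g*d) := by rw [← h1]
          _ = p.2 * ((g*d) * (g*d)) := mul_assoc _ _ _
          _ = p.2 * (g*d) := by rw [hgd]
          _ = 1 := h1.symm
      calc g = g * 1 := (mul_one g).symm
        _ = g * (g * d) := by rw [hgd1]
        _ = (g * g) * d := (mul_assoc _ _ _).symm
        _ = g * d := by rw [hg]
        _ = 1 := hgd1
  -- Step 3: A and B are groups
  have hAinv : ∀ a : A, ∃ e : A, a * e = 1 ∧ e * a = 1 := by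
    intro a
    obtain ⟨e, h1, h2⟩ := hA a
    refine ⟨e, hgA _ ?_, hgA _ ?_⟩
    · calc (a*e) * (a*e) = (a * e * a) * e := by simp [mul_assoc]
        _ = a * e := by rw [h1]
    · calc (e*a) * (e*a) = (e * a * e) * a := by simp [mul_assoc]
        _ = e * a := by rw [h2]
  have hBinv : ∀ b : B, ∃ f : B, b * f = 1 ∧ f * b = 1 := by
    intro b
    obtain ⟨f, h1, h2⟩ := hB b
    refine ⟨f, hgB _ ?_, hgB _ ?_⟩
    · calc (b*f) * (b*f) = (b * f * b) * f := by simp [mul_assoc]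
        _ = b * f := by rw [h1]
    · calc (f*b) * (f*b) = (f * b * f) * b := by simp [mul_assoc]
        _ = f * b := by rw [h2]
  -- Step 4: regularity
  rintro ⟨a, P, b⟩
  obtain ⟨e, hae, hea⟩ := hAinv a
  obtain ⟨f, hbf, hfb⟩ := hBinv b
  refine ⟨(e, sLR e P f, f), ?_, ?_⟩
  · show ((a*e)*a, sR (sR P f ∪ sL a (sLR e P f)) b ∪ sL (a*e) P, (b*f)*b) = (a, P, b)
    have hmid : sR (sR P f ∪ sL a (sLR e P f)) b ∪ sL (a*e) P = P := by
      ext q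
      constructor
      · rintro (⟨r, hr | hr, rfl⟩ | ⟨p, hp, rfl⟩)
        · obtain ⟨p, hp, rfl⟩ := hr
          have : (p.1, p.2 * f * b) = p := by
            rw [mul_assoc, hfb, mul_one]
          rw [this]; exact hp
        · obtain ⟨t, ⟨p, hp, rfl⟩, rfl⟩ := hr
          have : (a * (e * p.1), p.2 * f * b) = p := by
            rw [← mul_assoc a e, hae, one_mul, mul_assoc, hfb, mul_one]
          rw [this]; exact hp
        · simpa [hae] using hp
      · intro hq
        refine Or.inr ⟨q, hq, ?_⟩
        rw [hae, one_mul]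
    rw [hmid, hae, one_mul, hbf, one_mul]
  · show ((e*a)*e, sR (sR (sLR e P f) b ∪ sL e P) f ∪ sL (e*a) (sLR e P f), (f*b)*f) = (e, sLR e P f, f)
    have hmid : sR (sR (sLR e P f) b ∪ sL e P) f ∪ sL (e*a) (sLR e P f) = sLR e P f := by
      ext q
      constructor
      · rintro (⟨r, hr | hr, rfl⟩ | ⟨t, ht, rfl⟩)
        · obtain ⟨t, ⟨p, hp, rfl⟩, rfl⟩ := hr
          refine ⟨p, hp, ?_⟩
          rw [mul_assoc (p.2 * f), hbf, mul_one]
        · obtain ⟨p, hp, rfl⟩ := hr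
          exact ⟨p, hp, rfl⟩
        · simpa [hea] using ht
      · intro hq
        refine Or.inr ⟨q, hq, ?_⟩
        rw [hea, one_mul]
    rw [hmid, hea, one_mul, hfb, one_mul]
end

section
/- Let A and B be monoids. The Schützenberger product A◊B is regular if and only if (i) A and B are regular, and (ii) for every (a,P,b) ∈ A◊B, either P = aP₁b or P = caP₁bd for some P₁ ⊆ A×B, c ∈ a⁻¹, d ∈ b⁻¹. -/
/- ### Auxiliary lemmas -/

section Aux
variable {A B : Type*} [Monoid A] [Monoid B]

lemma sR_sR (P : Set (A × B)) (d b : B) : sR (sR P d) b = sR P (d * b) := by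
  ext q
  constructor
  · rintro ⟨p, ⟨p', hp', rfl⟩, rfl⟩
    exact ⟨p', hp', by simp [mul_assoc]⟩
  · rintro ⟨p, hp, rfl⟩
    exact ⟨(p.1, p.2 * d), ⟨p, hp, rfl⟩, by simp [mul_assoc]⟩

lemma sL_sL (a c : A) (P : Set (A × B)) : sL a (sL c P) = sL (a * c) P := by
  ext q
  constructor
  · rintro ⟨p, ⟨p', hp', rfl⟩, rfl⟩
    exact ⟨p', hp', by simp [mul_assoc]⟩
  · rintro ⟨p, hp, rfl⟩
    exact ⟨(c * p.1, p.2), ⟨p, hp, rfl⟩, by simp [mul_assoc]⟩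

lemma sR_one (P : Set (A × B)) : sR P (1 : B) = P := by
  ext q
  constructor
  · rintro ⟨p, hp, rfl⟩
    simpa using hp
  · intro hq
    exact ⟨q, hq, by simp⟩

lemma sL_one (P : Set (A × B)) : sL (1 : A) P = P := by
  ext q
  constructor
  · rintro ⟨p, hp, rfl⟩
    simpa using hp
  · intro hq
    exact ⟨q, hq, by simp⟩

lemma sR_union (P Q : Set (A × B)) (b : B) : sR (P ∪ Q) b = sR P b ∪ sR Q b := by
  ext q
  constructor
  · rintro ⟨p, hp | hp, rfl⟩
    · exact Or.inl ⟨p, hp, rfl⟩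
    · exact Or.inr ⟨p, hp, rfl⟩
  · rintro (⟨p, hp, rfl⟩ | ⟨p, hp, rfl⟩)
    · exact ⟨p, Or.inl hp, rfl⟩
    · exact ⟨p, Or.inr hp, rfl⟩

lemma sLR_eq (a : A) (P : Set (A × B)) (b : B) : sLR a P b = sL a (sR P b) := by
  ext q
  constructor
  · rintro ⟨p, hp, rfl⟩
    exact ⟨(p.1, p.2 * b), ⟨p, hp, rfl⟩, rfl⟩
  · rintro ⟨p, ⟨p', hp', rfl⟩, rfl⟩
    exact ⟨p', hp', rfl⟩

lemma sR_sL (a : A) (P : Set (A × B)) (b : B) : sR (sL a P) b = sL a (sR P b) := by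
  ext q
  constructor
  · rintro ⟨p, ⟨p', hp', rfl⟩, rfl⟩
    exact ⟨(p'.1, p'.2 * b), ⟨p', hp', rfl⟩, rfl⟩
  · rintro ⟨p, ⟨p', hp', rfl⟩, rfl⟩
    exact ⟨(a * p'.1, p'.2), ⟨p', hp', rfl⟩, rfl⟩

/-- In a monoid where every element has a right inverse, every element is invertible. -/
lemma allRight_group {M : Type*} [Monoid M] (h : ∀ a : M, ∃ c, a * c = 1) :
    ∀ a : M, ∃ c, a * c = 1 ∧ c * a = 1 := by
  intro a
  obtain ⟨c, hc⟩ := h a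
  obtain ⟨c', hc'⟩ := h c
  have ha : a = c' := by
    calc a = a * 1 := (mul_one a).symm
    _ = a * (c * c') := by rw [hc']
    _ = a * c * c' := (mul_assoc a c c').symm
    _ = c' := by rw [hc, one_mul]
  exact ⟨c, hc, by rw [ha]; exact hc'⟩

/-- In a monoid where every element has a left inverse, every element is invertible. -/
lemma allLeft_group {M : Type*} [Monoid M] (h : ∀ a : M, ∃ c, c * a = 1) :
    ∀ a : M, ∃ c, a * c = 1 ∧ c * a = 1 := by
  intro a
  obtain ⟨c, hc⟩ := h a
  obtain ⟨c', hc'⟩ := h c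
  have ha : a = c' := by
    calc a = 1 * a := (one_mul a).symm
    _ = (c' * c) * a := by rw [hc']
    _ = c' * (c * a) := mul_assoc c' c a
    _ = c' := by rw [hc, mul_one]
  exact ⟨c, by rw [ha]; exact hc', hc⟩

/-- A one-sided invertible idempotent is the identity. -/
lemma idem_onesided_eq_one {M : Type*} [Monoid M] {e : M} (he : e * e = e)
    (h : (∃ u, e * u = 1) ∨ (∃ v, v * e = 1)) : e = 1 := by
  rcases h with ⟨u, hu⟩ | ⟨v, hv⟩
  · calc e = e * 1 := (mul_one e).symm
    _ = e * (e * u) := by rw [hu]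
    _ = (e * e) * u := (mul_assoc e e u).symm
    _ = e * u := by rw [he]
    _ = 1 := hu
  · calc e = 1 * e := (one_mul e).symm
    _ = (v * e) * e := by rw [hv]
    _ = v * (e * e) := mul_assoc v e e
    _ = v * e := by rw [he]
    _ = 1 := hv

/-- If every element is left- or right-invertible, the monoid is a group. -/
lemma onesided_group {M : Type*} [Monoid M]
    (h : ∀ a : M, (∃ u, a * u = 1) ∨ (∃ v, v * a = 1)) :
    ∀ a : M, ∃ c, a * c = 1 ∧ c * a = 1 := by
  intro a
  rcases h a with ⟨u, hu⟩ | ⟨v, hv⟩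
  · have hid : (u * a) * (u * a) = u * a := by
      calc (u * a) * (u * a) = u * (a * (u * a)) := mul_assoc u a (u * a)
      _ = u * ((a * u) * a) := by rw [mul_assoc a u a]
      _ = u * a := by rw [hu, one_mul]
    exact ⟨u, hu, idem_onesided_eq_one hid (h (u * a))⟩
  · have hid : (a * v) * (a * v) = a * v := by
      calc (a * v) * (a * v) = a * (v * (a * v)) := mul_assoc a v (a * v)
      _ = a * ((v * a) * v) := by rw [mul_assoc v a v]
      _ = a * v := by rw [hv, one_mul]
    exact ⟨v, idem_onesided_eq_one hid (h (a * v)), hv⟩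

end Aux

/-- `A ◊ B` is regular iff `A` and `B` are regular and every middle component
has the form `aP₁b` or `caP₁bd`. -/
theorem schuetzenberger_regular_iff (A B : Type*) [Monoid A] [Monoid B] :
    SReg A B ↔
      (RegM A ∧ RegM B) ∧
      (∀ (a : A) (P : Set (A × B)) (b : B),
        (∃ P₁ : Set (A × B), P = sLR a P₁ b) ∨
        (∃ (P₁ : Set (A × B)) (c : A) (d : B),
          (a * c * a = a ∧ c * a * c = c) ∧ (b * d * b = b ∧ d * b * d = d) ∧
          P = sLR (c * a) P₁ (b * d))) := by
  -- First: `SReg A B` implies every element of `A` has a right inverse.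
  have keyA : SReg A B → ∀ a : A, ∃ c, a * c = 1 := by
    intro hS a
    obtain ⟨y, h1, -⟩ := hS (a, ({((1 : A), (1 : B))} : Set (A × B)), 1)
    have hmem : ((a * y.1) * 1, (1 : B)) ∈
        (sMul (sMul (a, ({((1 : A), (1 : B))} : Set (A × B)), 1) y)
          (a, ({((1 : A), (1 : B))} : Set (A × B)), 1)).2.1 :=
      Or.inr ⟨((1 : A), (1 : B)), rfl, rfl⟩
    rw [h1] at hmem
    have heq : ((a * y.1) * 1, (1 : B)) = ((1 : A), (1 : B)) := hmem
    have := congrArg Prod.fst heq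
    simp only [mul_one] at this
    exact ⟨y.1, this⟩
  -- And every element of `B` has a left inverse.
  have keyB : SReg A B → ∀ b : B, ∃ d, d * b = 1 := by
    intro hS b
    obtain ⟨y, h1, -⟩ := hS ((1 : A), ({((1 : A), (1 : B))} : Set (A × B)), b)
    have hmem : ((1 : A), ((1 : B) * y.2.2) * b) ∈
        (sMul (sMul ((1 : A), ({((1 : A), (1 : B))} : Set (A × B)), b) y)
          ((1 : A), ({((1 : A), (1 : B))} : Set (A × B)), b)).2.1 :=
      Or.inl ⟨((1 : A), (1 : B) * y.2.2), Or.inl ⟨((1 : A), (1 : B)), rfl, rfl⟩, rfl⟩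
    rw [h1] at hmem
    have heq : ((1 : A), ((1 : B) * y.2.2) * b) = ((1 : A), (1 : B)) := hmem
    have := congrArg Prod.snd heq
    simp only [one_mul] at this
    exact ⟨y.2.2, this⟩
  constructor
  · -- Forward direction.
    intro hS
    have hA : ∀ a : A, ∃ c, a * c = 1 ∧ c * a = 1 := allRight_group (keyA hS)
    have hB : ∀ b : B, ∃ d, b * d = 1 ∧ d * b = 1 := allLeft_group (keyB hS)
    refine ⟨⟨fun a => ?_, fun b => ?_⟩, fun a P b => ?_⟩
    · obtain ⟨c, hc1, hc2⟩ := hA a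
      exact ⟨c, by rw [hc1, one_mul], by rw [hc2, one_mul]⟩
    · obtain ⟨d, hd1, hd2⟩ := hB b
      exact ⟨d, by rw [hd1, one_mul], by rw [hd2, one_mul]⟩
    · obtain ⟨c, hc1, hc2⟩ := hA a
      obtain ⟨d, hd1, hd2⟩ := hB b
      refine Or.inl ⟨sL c (sR P d), ?_⟩
      have : sLR a (sL c (sR P d)) b = P := by
        rw [sLR_eq, sR_sL, sR_sR, hd2, sR_one, sL_sL, hc1, sL_one]
      exact this.symm
  · -- Reverse direction.
    rintro ⟨⟨hRA, hRB⟩, hii⟩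
    -- `A` is a group.
    have hA : ∀ a : A, ∃ c, a * c = 1 ∧ c * a = 1 := by
      apply onesided_group
      intro a
      rcases hii a Set.univ 1 with ⟨P₁, hP⟩ | ⟨P₁, c, d, ⟨hc1, hc2⟩, hd, hP⟩
      · have hmem : ((1 : A), (1 : B)) ∈ sLR a P₁ (1 : B) := by
          rw [← hP]; trivial
        obtain ⟨p, hp, heq⟩ := hmem
        have := congrArg Prod.fst heq
        exact Or.inl ⟨p.1, this.symm⟩
      · have hmem : ((1 : A), (1 : B)) ∈ sLR (c * a) P₁ ((1 : B) * d) := by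
          rw [← hP]; trivial
        obtain ⟨p, hp, heq⟩ := hmem
        have h1 : (1 : A) = (c * a) * p.1 := congrArg Prod.fst heq
        have hidem : (c * a) * (c * a) = c * a := by
          calc (c * a) * (c * a) = c * (a * (c * a)) := mul_assoc c a (c * a)
          _ = c * ((a * c) * a) := by rw [mul_assoc a c a]
          _ = c * a := by rw [hc1]
        have : c * a = 1 := idem_onesided_eq_one hidem (Or.inl ⟨p.1, h1.symm⟩)
        exact Or.inr ⟨c, this⟩
    -- `B` is a group.
    have hB : ∀ b : B, ∃ d, b * d = 1 ∧ d * b = 1 := by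
      apply onesided_group
      intro b
      rcases hii 1 Set.univ b with ⟨P₁, hP⟩ | ⟨P₁, c, d, hc, ⟨hd1, hd2⟩, hP⟩
      · have hmem : ((1 : A), (1 : B)) ∈ sLR (1 : A) P₁ b := by
          rw [← hP]; trivial
        obtain ⟨p, hp, heq⟩ := hmem
        have := congrArg Prod.snd heq
        exact Or.inr ⟨p.2, this.symm⟩
      · have hmem : ((1 : A), (1 : B)) ∈ sLR (c * 1) P₁ (b * d) := by
          rw [← hP]; trivial
        obtain ⟨p, hp, heq⟩ := hmem
        have h1 : (1 : B) = p.2 * (b * d) := congrArg Prod.snd heq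
        have hidem : (b * d) * (b * d) = b * d := by
          calc (b * d) * (b * d) = b * (d * (b * d)) := mul_assoc b d (b * d)
          _ = b * ((d * b) * d) := by rw [mul_assoc d b d]
          _ = b * d := by rw [hd2]
        have : b * d = 1 := idem_onesided_eq_one hidem (Or.inr ⟨p.2, h1.symm⟩)
        exact Or.inl ⟨d, this⟩
    -- Now every element of `A ◊ B` is regular.
    rintro ⟨a, P, b⟩
    obtain ⟨a', ha1, ha2⟩ := hA a
    obtain ⟨b', hb1, hb2⟩ := hB b
    refine ⟨(a', sL a' (sR P b'), b'), ?_, ?_⟩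
    · show ((a * a') * a,
        sR (sR P b' ∪ sL a (sL a' (sR P b'))) b ∪ sL (a * a') P,
        (b * b') * b) = (a, P, b)
      refine Prod.ext ?_ (Prod.ext ?_ ?_)
      · show (a * a') * a = a
        rw [ha1, one_mul]
      · show sR (sR P b' ∪ sL a (sL a' (sR P b'))) b ∪ sL (a * a') P = P
        rw [sR_union, sR_sR, hb2, sR_one, sR_sL, sR_sL, sR_sR, hb2, sR_one,
          sL_sL, ha1, sL_one, Set.union_self, Set.union_self]
      · show (b * b') * b = b
        rw [hb1, one_mul]
    · show ((a' * a) * a',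
        sR (sR (sL a' (sR P b')) b ∪ sL a' P) b' ∪ sL (a' * a) (sL a' (sR P b')),
        (b' * b) * b') = (a', sL a' (sR P b'), b')
      refine Prod.ext ?_ (Prod.ext ?_ ?_)
      · show (a' * a) * a' = a'
        rw [ha2, one_mul]
      · show sR (sR (sL a' (sR P b')) b ∪ sL a' P) b' ∪ sL (a' * a) (sL a' (sR P b'))
            = sL a' (sR P b')
        rw [sR_union, sR_sL, sR_sL, sR_sR, hb1, sR_one, sR_sL, ha2, sL_one,
          Set.union_self, Set.union_self]
      · show (b' * b) * b' = b'
        rw [hb2, one_mul]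
end

section
/- Let a ∈ A, b ∈ B with c ∈ a⁻¹, d ∈ b⁻¹, and P₁ ⊆ A×B. If P = aP₁b, then the element (c, caP₁bd, d) is an inverse of (a, P, b) in A◊B, i.e. (a,P,b)(c,caP₁bd,d)(a,P,b) = (a,P,b) and (c,caP₁bd,d)(a,P,b)(c,caP₁bd,d) = (c,caP₁bd,d). -/
/-- If `P = aP₁b` then `(c, caP₁bd, d)` is an inverse of `(a, P, b)` in `A ◊ B`. -/
theorem explicit_inverse_in_schuetzenberger (A B : Type*) [Monoid A] [Monoid B]
    (a c : A) (b d : B) (P₁ : Set (A × B))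
    (hac : a * c * a = a) (hca : c * a * c = c)
    (hbd : b * d * b = b) (hdb : d * b * d = d) :
    sMul (sMul (a, sLR a P₁ b, b) (c, sLR (c * a) P₁ (b * d), d)) (a, sLR a P₁ b, b)
        = (a, sLR a P₁ b, b) ∧
    sMul (sMul (c, sLR (c * a) P₁ (b * d), d) (a, sLR a P₁ b, b))
        (c, sLR (c * a) P₁ (b * d), d) = (c, sLR (c * a) P₁ (b * d), d) := by
  constructor <;>
  · refine Prod.ext ?_ (Prod.ext ?_ ?_) <;> simp [sMul, hac, hca, hbd, hdb, mul_assoc]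
    all_goals
      ext q
      simp only [sMul, sR, sL, sLR, Set.mem_union, Set.mem_setOf_eq]
      constructor
      · rintro (⟨_, (⟨_, ⟨p, hp, rfl⟩, rfl⟩ | ⟨_, ⟨p, hp, rfl⟩, rfl⟩), rfl⟩ |
            ⟨_, ⟨p, hp, rfl⟩, rfl⟩) <;>
          refine ⟨p, hp, ?_⟩ <;> simp [mul_assoc] <;>
          simp [← mul_assoc, hac, hca, hbd, hdb]
      · rintro ⟨p, hp, rfl⟩
        refine Or.inl ⟨_, Or.inl ⟨_, ⟨p, hp, rfl⟩, rfl⟩, ?_⟩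
        simp [mul_assoc]
        simp [← mul_assoc, hac, hca, hbd, hdb]
end

section
/- The new version of the Schützenberger product A◊ᵥB, defined on the set A^(⊕B) × P(A^(⊕B) × B) × B with multiplication (f, P₁, b₁)(g, P₂, b₂) = (f·ᵇ¹g, P₁b₂ ∪ P₂, b₁b₂), where (x)(ᵇ¹g) = (xb₁)g, is a monoid with identity (1̄, ∅, 1_B). -/
section VSch
variable {A B : Type*} [Monoid A] [Monoid B]

/-- `Pb = {(h, cb) : (h,c) ∈ P}` -/
def vR (P : Set ((B → A) × B)) (b : B) : Set ((B → A) × B) :=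
  {q | ∃ p ∈ P, q = (p.1, p.2 * b)}

/-- The translate `ᵘh`, defined by `(x)(ᵘh) = (xu)h`. -/
def tr (u : B) (h : B → A) : B → A := fun x => h (x * u)

/-- Multiplication of the new version `A ◊ᵥ B` of the Schützenberger product:
`(f,P₁,b₁)(g,P₂,b₂) = (f·ᵇ¹g, P₁b₂ ∪ P₂, b₁b₂)`. -/
def vMul (x y : (B → A) × Set ((B → A) × B) × B) : (B → A) × Set ((B → A) × B) × B :=
  (x.1 * tr x.2.2 y.1, vR x.2.1 y.2.2 ∪ y.2.1, x.2.2 * y.2.2)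

/-- The identity of `A ◊ᵥ B`. -/
def vOne : (B → A) × Set ((B → A) × B) × B := (1, ∅, 1)

/-- Membership in `A ◊ᵥ B = A^(⊕B) × P(A^(⊕B) × B) × B`: all function components
are finitely supported. -/
def InV (x : (B → A) × Set ((B → A) × B) × B) : Prop :=
  (Function.mulSupport x.1).Finite ∧ ∀ p ∈ x.2.1, (Function.mulSupport p.1).Finite

/-- Regularity of `A ◊ᵥ B`. -/
def VReg (A B : Type*) [Monoid A] [Monoid B] : Prop :=
  ∀ x : (B → A) × Set ((B → A) × B) × B, InV x →
    ∃ y, InV y ∧ vMul (vMul x y) x = x ∧ vMul (vMul y x) y = y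

end VSch


lemma vR_union {A B : Type*} [Monoid A] [Monoid B] (P Q : Set ((B → A) × B)) (b : B) :
    vR (P ∪ Q) b = vR P b ∪ vR Q b := by
  ext q
  constructor
  · rintro ⟨p, (hp | hp), rfl⟩
    · exact Or.inl ⟨p, hp, rfl⟩
    · exact Or.inr ⟨p, hp, rfl⟩
  · rintro (⟨p, hp, rfl⟩ | ⟨p, hp, rfl⟩)
    · exact ⟨p, Or.inl hp, rfl⟩
    · exact ⟨p, Or.inr hp, rfl⟩

lemma vR_vR {A B : Type*} [Monoid A] [Monoid B] (P : Set ((B → A) × B)) (b c : B) :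
    vR (vR P b) c = vR P (b * c) := by
  ext q
  constructor
  · rintro ⟨p, ⟨r, hr, rfl⟩, rfl⟩
    exact ⟨r, hr, by simp [mul_assoc]⟩
  · rintro ⟨p, hp, rfl⟩
    exact ⟨(p.1, p.2 * b), ⟨p, hp, rfl⟩, by simp [mul_assoc]⟩

lemma vR_empty {A B : Type*} [Monoid A] [Monoid B] (b : B) :
    vR (∅ : Set ((B → A) × B)) b = ∅ := by
  ext q; constructor
  · rintro ⟨p, hp, rfl⟩; exact hp.elim
  · rintro ⟨⟩

lemma vR_one {A B : Type*} [Monoid A] [Monoid B] (P : Set ((B → A) × B)) :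
    vR P 1 = P := by
  ext q; constructor
  · rintro ⟨p, hp, rfl⟩; simpa using hp
  · intro hq; exact ⟨q, hq, by simp⟩

/-- `A ◊ᵥ B` (with `B` a finite monoid or a group) is a monoid with identity
`(1̄, ∅, 1_B)`: the carrier is closed under the multiplication, the
multiplication is associative, and `(1̄, ∅, 1_B)` is a two-sided identity. -/
theorem vschuetzenberger_is_monoid (A B : Type*) [Monoid A] [Monoid B]
    (hB : Finite B ∨ ∀ b : B, IsUnit b) :
    InV (vOne : (B → A) × Set ((B → A) × B) × B) ∧
    (∀ x y : (B → A) × Set ((B → A) × B) × B, InV x → InV y → InV (vMul x y)) ∧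
    (∀ x y z : (B → A) × Set ((B → A) × B) × B,
      vMul (vMul x y) z = vMul x (vMul y z)) ∧
    (∀ x : (B → A) × Set ((B → A) × B) × B, vMul vOne x = x ∧ vMul x vOne = x) := by
  have htr : ∀ (u : B) (h : B → A), (Function.mulSupport h).Finite →
      (Function.mulSupport (tr u h)).Finite := by
    intro u h hh
    rcases hB with hfin | hunit
    · exact Set.toFinite _
    · obtain ⟨v, hv⟩ := hunit u
      have : Function.mulSupport (tr u h) ⊆ (fun x => x * ↑v⁻¹) '' Function.mulSupport h := by
        intro x hx
        refine ⟨x * u, hx, ?_⟩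
        simp [← hv, mul_assoc]
      exact (hh.image _).subset this
  refine ⟨?_, ?_, ?_, ?_⟩
  · constructor
    · simp [vOne]
    · intro p hp; simp [vOne] at hp
  · rintro x y ⟨hx1, hx2⟩ ⟨hy1, hy2⟩
    constructor
    · exact (hx1.union (htr _ _ hy1)).subset (Function.mulSupport_mul _ _)
    · rintro p hp
      rcases hp with hp | hp
      · obtain ⟨q, hq, rfl⟩ := hp
        exact hx2 q hq
      · exact hy2 p hp
  · intro x y z
    unfold vMul
    refine Prod.ext ?_ (Prod.ext ?_ ?_) <;> simp only
    · funext w; simp [tr, mul_assoc]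
    · rw [vR_union, vR_vR, Set.union_assoc]
    · exact mul_assoc _ _ _
  · intro x
    constructor
    · unfold vMul vOne
      refine Prod.ext ?_ (Prod.ext ?_ ?_) <;> simp only
      · funext w; simp [tr]
      · rw [vR_empty, Set.empty_union]
      · exact one_mul _
    · unfold vMul vOne
      refine Prod.ext ?_ (Prod.ext ?_ ?_) <;> simp only
      · funext w; simp [tr]
      · rw [vR_one, Set.union_empty]
      · exact mul_one _
end

section
/- If A◊ᵥB is regular, then A and B are regular monoids. -/
/-- If `A ◊ᵥ B` is regular then `A` and `B` are regular. -/
theorem regular_of_vschuetzenberger_regular (A B : Type*) [Monoid A] [Monoid B]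
    (hB : Finite B ∨ ∀ b : B, IsUnit b) (h : VReg A B) :
    RegM A ∧ RegM B := by
  constructor
  · intro a
    classical
    set f : B → A := fun x => if x = 1 then a else 1 with hf
    have hfin : (Function.mulSupport f).Finite := by
      apply (Set.finite_singleton (1 : B)).subset
      intro x hx
      simp only [Function.mem_mulSupport, hf] at hx
      split at hx
      · simpa using ‹x = 1›
      · simp at hx
    obtain ⟨y, hy, h1, h2⟩ := h (f, ∅, 1) ⟨hfin, by simp⟩
    have hc : y.2.2 = 1 := by
      have := congrArg (fun z => z.2.2) h1
      simpa [vMul] using this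
    have e1 := congrFun (congrArg (fun z => z.1) h1) 1
    have e2 := congrFun (congrArg (fun z => z.1) h2) 1
    simp only [vMul, tr, hc, Pi.mul_apply, one_mul, mul_one] at e1 e2
    refine ⟨y.1 1, ?_, ?_⟩
    · simpa [hf] using e1
    · simpa [hf] using e2
  · intro b
    obtain ⟨y, hy, h1, h2⟩ := h ((1 : B → A), ∅, b) ⟨by simp, by simp⟩
    have e1 := congrArg (fun z => z.2.2) h1
    have e2 := congrArg (fun z => z.2.2) h2
    simp only [vMul] at e1 e2
    exact ⟨y.2.2, e1, e2⟩
end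

section
/- Let f ∈ A^(⊕B), let b, d ∈ B with bdb = b and dbd = d, and suppose for every x ∈ B there is a_x ∈ A with (x)f = a_x·(xbd)f. If v ∈ A^(⊕B) satisfies fvf = f and vfv = v (pointwise), then with g = ᵈv one has f·ᵇg·ᵇᵈf = f and g·ᵈf·ᵈᵇg = g, where (x)(ᵘh) = (xu)h for u ∈ B. -/
/-- With `g = ᵈv` one has `f·ᵇg·ᵇᵈf = f` and `g·ᵈf·ᵈᵇg = g`. -/
theorem translate_inverse_equations (A B : Type*) [Monoid A] [Monoid B]
    (f v : B → A)
    (hf : (Function.mulSupport f).Finite) (hv : (Function.mulSupport v).Finite)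
    (b d : B) (hbd : b * d * b = b) (hdb : d * b * d = d)
    (ha : ∀ x : B, ∃ a : A, f x = a * f (x * (b * d)))
    (hfvf : f * v * f = f) (hvfv : v * f * v = v) :
    f * tr b (tr d v) * tr (b * d) f = f ∧
    tr d v * tr d f * tr (d * b) (tr d v) = tr d v := by
  constructor
  · funext x
    obtain ⟨a, haa⟩ := ha x
    have h1 : f (x * (b * d)) * v (x * (b * d)) * f (x * (b * d)) = f (x * (b * d)) :=
      congrFun hfvf (x * (b * d))
    show f x * v (x * b * d) * f (x * (b * d)) = f x
    rw [mul_assoc x b d, haa, mul_assoc, mul_assoc, ← mul_assoc (f _), h1]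
  · funext x
    have h1 : v (x * d) * f (x * d) * v (x * d) = v (x * d) := congrFun hvfv (x * d)
    show v (x * d) * f (x * d) * v (x * (d * b) * d) = v (x * d)
    have : x * (d * b) * d = x * d := by rw [mul_assoc, mul_assoc, ← mul_assoc d b d, hdb]
    rw [this, h1]
end
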